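/- arXiv:2502.10532 — 2 statements merged into one kernel-verified Lean document; each statement's English description precedes it below -/
import Mathlib

section
/- (Theorem 1, in-probability form.) Let (Ω, 𝔉, μ) be a probability space. For each n ∈ ℕ let p_n ∈ ℕ, let S*_n be a configuration of {0,...,p_n−1}, let ω ↦ π_n^ω be a family of probability mass functions on the 2^{p_n} configurations with π_n^ω(S) > 0 for all S and ω, such that ω ↦ π_n^ω(S*_n) is measurable, and let ω ↦ φ̂_n(ω) ∈ [0,1]^{p_n} be such that for every ω, φ̂_n(ω) minimizes φ ↦ KL(q_φ ∥ π_n^ω) over [0,1]^{p_n}, with ω ↦ q_{φ̂_n(ω)}(S*_n) measurable. If the random variables π_n^ω(S*_n) converge to 1 in μ-measure as n → ∞, then the random variables q_{φ̂_n(ω)}(S*_n) converge to 1 in μ-measure as n → ∞. -/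
open Finset Filter MeasureTheory

/-- Product-Bernoulli mass function on configurations `S ⊆ {0,…,p-1}`. -/
noncomputable def bernoulliMass {p : ℕ} (φ : Fin p → ℝ) (S : Finset (Fin p)) : ℝ :=
  (∏ j ∈ S, φ j) * ∏ j ∈ Sᶜ, (1 - φ j)

/-- Kullback–Leibler divergence, with the convention `0 · log 0 = 0`. -/
noncomputable def klDiv {p : ℕ} (q π : Finset (Fin p) → ℝ) : ℝ :=
  ∑ S : Finset (Fin p), q S * Real.log (q S / π S)

lemma sum_bernoulliMass {p : ℕ} (φ : Fin p → ℝ) :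
    ∑ S : Finset (Fin p), bernoulliMass φ S = 1 := by
  have h := Finset.prod_add φ (fun j => 1 - φ j) (Finset.univ : Finset (Fin p))
  simp only [add_sub_cancel, Finset.prod_const_one, Finset.powerset_univ] at h
  rw [h]
  apply Finset.sum_congr rfl
  intro S _
  rw [bernoulliMass, Finset.compl_eq_univ_sdiff]

lemma bernoulliMass_nonneg {p : ℕ} {φ : Fin p → ℝ} (hφ : ∀ j, φ j ∈ Set.Icc (0:ℝ) 1)
    (S : Finset (Fin p)) : 0 ≤ bernoulliMass φ S := by
  apply mul_nonneg
  · exact Finset.prod_nonneg fun j _ => (hφ j).1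
  · exact Finset.prod_nonneg fun j _ => by linarith [(hφ j).2]

lemma bernoulliMass_le_one {p : ℕ} {φ : Fin p → ℝ} (hφ : ∀ j, φ j ∈ Set.Icc (0:ℝ) 1)
    (S : Finset (Fin p)) : bernoulliMass φ S ≤ 1 := by
  have h1 : (∏ j ∈ S, φ j) ≤ 1 :=
    Finset.prod_le_one (fun j _ => (hφ j).1) (fun j _ => (hφ j).2)
  have h2 : (∏ j ∈ Sᶜ, (1 - φ j)) ≤ 1 :=
    Finset.prod_le_one (fun j _ => by linarith [(hφ j).2]) (fun j _ => by linarith [(hφ j).1])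
  have h2' : 0 ≤ ∏ j ∈ Sᶜ, (1 - φ j) := Finset.prod_nonneg fun j _ => by linarith [(hφ j).2]
  exact mul_le_one₀ h1 h2' h2

lemma bernoulliMass_indicator {p : ℕ} (S0 S : Finset (Fin p)) :
    bernoulliMass (fun j => if j ∈ S0 then (1:ℝ) else 0) S = if S = S0 then 1 else 0 := by
  rw [bernoulliMass]
  by_cases h : S = S0
  · subst h
    rw [if_pos rfl]
    rw [Finset.prod_congr rfl (fun j hj => if_pos hj)]
    have : ∀ j ∈ Sᶜ, (1 - if j ∈ S then (1:ℝ) else 0) = 1 := by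
      intro j hj
      rw [if_neg (Finset.mem_compl.mp hj)]; ring
    rw [Finset.prod_congr rfl this]
    simp
  · rw [if_neg h]
    by_cases hsub : S ⊆ S0
    · have : ∃ j ∈ S0, j ∉ S := by
        by_contra hc
        push_neg at hc
        exact h (Finset.Subset.antisymm hsub hc)
      obtain ⟨j, hj0, hjS⟩ := this
      rw [Finset.prod_eq_zero (Finset.mem_compl.mpr hjS) (by simp [hj0])]
      ring
    · obtain ⟨j, hjS, hj0⟩ := Finset.not_subset.mp hsub
      rw [Finset.prod_eq_zero hjS (by simp [hj0])]
      ring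

lemma klDiv_indicator_aux {p : ℕ} (S0 : Finset (Fin p)) (w : Finset (Fin p) → ℝ) :
    ∑ S : Finset (Fin p),
      (if S = S0 then (1:ℝ) else 0) * Real.log ((if S = S0 then (1:ℝ) else 0) / w S)
      = - Real.log (w S0) := by
  rw [Finset.sum_eq_single S0]
  · simp [Real.log_div one_ne_zero]
  · intro b _ hb; simp [hb]
  · simp

lemma log_sum_ineq {ι : Type*} (s : Finset ι) (hs : s.Nonempty) (q w : ι → ℝ)
    (hq : ∀ i ∈ s, 0 ≤ q i) (hw : ∀ i ∈ s, 0 < w i) :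
    (∑ i ∈ s, q i) * Real.log ((∑ i ∈ s, q i) / (∑ i ∈ s, w i)) ≤
      ∑ i ∈ s, q i * Real.log (q i / w i) := by
  have hwsum : 0 < ∑ i ∈ s, w i := Finset.sum_pos hw hs
  have hj := Real.convexOn_mul_log.map_centerMass_le (t := s) (w := w) (p := fun i => q i / w i)
    (fun i hi => (hw i hi).le) hwsum
    (fun i hi => Set.mem_Ici.mpr (div_nonneg (hq i hi) (hw i hi).le))
  rw [Finset.centerMass, Finset.centerMass] at hj
  simp only [smul_eq_mul, Function.comp] at hj
  have h1 : ∑ i ∈ s, w i * (q i / w i) = ∑ i ∈ s, q i := by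
    apply Finset.sum_congr rfl; intro i hi
    rw [mul_div_assoc', mul_div_cancel_left₀ _ (hw i hi).ne']
  have h2 : ∑ i ∈ s, w i * (q i / w i * Real.log (q i / w i))
      = ∑ i ∈ s, q i * Real.log (q i / w i) := by
    apply Finset.sum_congr rfl; intro i hi
    rw [← mul_assoc, mul_div_cancel₀]
    exact (hw i hi).ne'
  rw [h1, h2] at hj
  have hmul := mul_le_mul_of_nonneg_left hj hwsum.le
  rw [mul_inv_cancel_left₀ hwsum.ne'] at hmul
  calc (∑ i ∈ s, q i) * Real.log ((∑ i ∈ s, q i) / (∑ i ∈ s, w i))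
      = (∑ i ∈ s, w i) * ((∑ i ∈ s, w i)⁻¹ * (∑ i ∈ s, q i) *
          Real.log ((∑ i ∈ s, w i)⁻¹ * (∑ i ∈ s, q i))) := by
        rw [← mul_assoc, mul_inv_cancel_left₀ hwsum.ne', div_eq_inv_mul]
    _ ≤ ∑ i ∈ s, q i * Real.log (q i / w i) := hmul

lemma klDiv_two_block {p : ℕ} (S0 : Finset (Fin p)) (q w : Finset (Fin p) → ℝ)
    (hq : ∀ S, 0 ≤ q S) (hw : ∀ S, 0 < w S)
    (hne : ((Finset.univ : Finset (Finset (Fin p))).erase S0).Nonempty) :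
    q S0 * Real.log (q S0 / w S0) +
      (∑ S ∈ Finset.univ.erase S0, q S) *
        Real.log ((∑ S ∈ Finset.univ.erase S0, q S) / (∑ S ∈ Finset.univ.erase S0, w S))
      ≤ klDiv q w := by
  rw [klDiv, ← Finset.add_sum_erase _ _ (Finset.mem_univ S0)]
  exact add_le_add le_rfl
    (log_sum_ineq _ hne q w (fun S _ => hq S) (fun S _ => hw S))

theorem stmt_4 {Ω : Type*} [MeasurableSpace Ω] (μ : Measure Ω) [IsProbabilityMeasure μ]
    (p : ℕ → ℕ) (Sstar : ∀ n : ℕ, Finset (Fin (p n)))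
    (π : ∀ n : ℕ, Ω → Finset (Fin (p n)) → ℝ)
    (hπsum : ∀ n ω, ∑ S : Finset (Fin (p n)), π n ω S = 1)
    (hπpos : ∀ n ω S, 0 < π n ω S)
    (hπmeas : ∀ n, Measurable fun ω => π n ω (Sstar n))
    (φhat : ∀ n : ℕ, Ω → Fin (p n) → ℝ)
    (hφhat : ∀ n ω j, φhat n ω j ∈ Set.Icc (0 : ℝ) 1)
    (hmin : ∀ n ω (φ : Fin (p n) → ℝ), (∀ j, φ j ∈ Set.Icc (0 : ℝ) 1) →
      klDiv (bernoulliMass (φhat n ω)) (π n ω) ≤ klDiv (bernoulliMass φ) (π n ω))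
    (hqmeas : ∀ n, Measurable fun ω => bernoulliMass (φhat n ω) (Sstar n))
    (hconv : ∀ δ : ℝ, 0 < δ →
      Tendsto (fun n => μ {ω | δ ≤ |π n ω (Sstar n) - 1|}) atTop (nhds 0)) :
    ∀ δ : ℝ, 0 < δ →
      Tendsto (fun n => μ {ω | δ ≤ |bernoulliMass (φhat n ω) (Sstar n) - 1|})
        atTop (nhds 0) := by
  intro δ hδ
  set ε : ℝ := min (1/2) (δ * Real.exp (-2/δ) / 2) with hε_def
  have hexp : 0 < Real.exp (-2/δ) := Real.exp_pos _
  have hexp1 : Real.exp (-2/δ) ≤ 1 := by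
    rw [Real.exp_le_one_iff, neg_div]
    exact neg_nonpos.mpr (by positivity)
  have hε : 0 < ε := lt_min (by norm_num) (by positivity)
  have hεe : ε ≤ δ * Real.exp (-2/δ) / 2 := min_le_right _ _
  have hεhalf : ε ≤ 1/2 := min_le_left _ _
  have hεδ : ε < δ := by nlinarith
  have key : ∀ n ω, |π n ω (Sstar n) - 1| < ε →
      |bernoulliMass (φhat n ω) (Sstar n) - 1| < δ := by
    intro n ω hπω
    set a := bernoulliMass (φhat n ω) (Sstar n) with ha_def
    set b := π n ω (Sstar n) with hb_def
    have ha0 : 0 ≤ a := bernoulliMass_nonneg (hφhat n ω) _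
    have ha1 : a ≤ 1 := bernoulliMass_le_one (hφhat n ω) _
    have hb0 : 0 < b := hπpos n ω _
    have hb1 : b ≤ 1 := by
      calc b ≤ ∑ S : Finset (Fin (p n)), π n ω S :=
            Finset.single_le_sum (fun S _ => (hπpos n ω S).le) (Finset.mem_univ _)
        _ = 1 := hπsum n ω
    rw [abs_sub_comm, abs_of_nonneg (by linarith : (0:ℝ) ≤ 1 - a)]
    rw [abs_sub_comm, abs_of_nonneg (by linarith : (0:ℝ) ≤ 1 - b)] at hπω
    have hsum_erase_π : ∑ S ∈ Finset.univ.erase (Sstar n), π n ω S = 1 - b := by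
      have h := Finset.add_sum_erase Finset.univ (π n ω) (Finset.mem_univ (Sstar n))
      rw [hπsum n ω] at h
      linarith
    have hsum_erase_q :
        ∑ S ∈ Finset.univ.erase (Sstar n), bernoulliMass (φhat n ω) S = 1 - a := by
      have h := Finset.add_sum_erase Finset.univ (bernoulliMass (φhat n ω))
        (Finset.mem_univ (Sstar n))
      rw [sum_bernoulliMass] at h
      linarith
    by_cases hone : 1 - b ≤ 0
    · -- b = 1 : the erase set must be empty, hence a = 1
      have htempty : Finset.univ.erase (Sstar n) = ∅ := by
        by_contra hne
        have hne' := Finset.nonempty_iff_ne_empty.mpr hne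
        have : 0 < ∑ S ∈ Finset.univ.erase (Sstar n), π n ω S :=
          Finset.sum_pos (fun S _ => hπpos n ω S) hne'
        linarith
      rw [htempty, Finset.sum_empty] at hsum_erase_q
      linarith
    · push_neg at hone
      by_contra hcon
      push_neg at hcon
      have hδ1 : δ ≤ 1 := by linarith
      have htne : (Finset.univ.erase (Sstar n)).Nonempty := by
        rw [Finset.nonempty_iff_ne_empty]
        intro h
        rw [h, Finset.sum_empty] at hsum_erase_π
        linarith
      -- upper bound on KL
      have hub : klDiv (bernoulliMass (φhat n ω)) (π n ω) ≤ - Real.log b := by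
        have h1 := hmin n ω (fun j => if j ∈ Sstar n then (1:ℝ) else 0)
          (fun j => by by_cases h : j ∈ Sstar n <;> simp [h])
        have h2 : klDiv (bernoulliMass (fun j => if j ∈ Sstar n then (1:ℝ) else 0)) (π n ω)
            = - Real.log b := by
          rw [klDiv, ← klDiv_indicator_aux (Sstar n) (π n ω)]
          apply Finset.sum_congr rfl
          intro S _
          rw [bernoulliMass_indicator]
        rw [h2] at h1
        exact h1
      -- lower bound on KL
      have hlb := klDiv_two_block (Sstar n) (bernoulliMass (φhat n ω)) (π n ω)
        (bernoulliMass_nonneg (hφhat n ω)) (hπpos n ω) htne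
      rw [hsum_erase_π, hsum_erase_q, ← ha_def, ← hb_def] at hlb
      have hterm : -1 ≤ a * Real.log (a / b) := by
        rcases eq_or_lt_of_le ha0 with h | h
        · rw [← h]; norm_num
        · have h1 : Real.log a⁻¹ ≤ a⁻¹ - 1 := Real.log_le_sub_one_of_pos (inv_pos.mpr h)
          rw [Real.log_inv] at h1
          have h2 := mul_le_mul_of_nonneg_left h1 h.le
          rw [mul_neg, mul_sub, mul_inv_cancel₀ h.ne'] at h2
          have hlogb : Real.log b ≤ 0 := Real.log_nonpos hb0.le hb1
          have h3 : a * Real.log b ≤ 0 := mul_nonpos_of_nonneg_of_nonpos ha0 hlogb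
          rw [Real.log_div h.ne' hb0.ne', mul_sub]
          linarith
      have hlogb2 : - Real.log b ≤ 1 := by
        have hhalf : (1/2 : ℝ) ≤ b := by linarith
        have hl : Real.log (1/2 : ℝ) ≤ Real.log b := Real.log_le_log (by norm_num) hhalf
        have h2 : Real.log 2 ≤ 1 := by
          linarith [Real.log_le_sub_one_of_pos (by norm_num : (0:ℝ) < 2)]
        rw [Real.log_div one_ne_zero (by norm_num), Real.log_one] at hl
        linarith
      have hchain : (1 - a) * Real.log ((1 - a) / (1 - b)) ≤ 2 := by linarith
      have hlog1 : 0 ≤ Real.log (δ / (1 - b)) :=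
        Real.log_nonneg ((le_div_iff₀ hone).mpr (by linarith))
      have hmono : Real.log (δ / (1 - b)) ≤ Real.log ((1 - a) / (1 - b)) := by
        apply Real.log_le_log (by positivity)
        gcongr
      have h3 : δ * Real.log (δ / (1 - b)) ≤ (1 - a) * Real.log ((1 - a) / (1 - b)) :=
        mul_le_mul hcon hmono hlog1 (by linarith)
      have h4 : 2 < δ * Real.log (δ / (1 - b)) := by
        have h5 : 1 - b < δ * Real.exp (-2/δ) := by nlinarith
        rw [neg_div, Real.exp_neg] at h5
        have h6 : Real.exp (2/δ) < δ / (1 - b) := by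
          rw [lt_div_iff₀ hone]
          have := Real.exp_pos (2/δ)
          calc Real.exp (2/δ) * (1 - b) < Real.exp (2/δ) * (δ * (Real.exp (2/δ))⁻¹) := by
                apply mul_lt_mul_of_pos_left h5 this
            _ = δ := by field_simp
        have h7 : 2/δ < Real.log (δ / (1 - b)) := by
          have hll := Real.log_lt_log (Real.exp_pos _) h6
          rwa [Real.log_exp] at hll
        calc (2:ℝ) = δ * (2/δ) := by field_simp
          _ < δ * Real.log (δ / (1 - b)) := mul_lt_mul_of_pos_left h7 hδ
      linarith
  have hle : ∀ n, μ {ω | δ ≤ |bernoulliMass (φhat n ω) (Sstar n) - 1|}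
      ≤ μ {ω | ε ≤ |π n ω (Sstar n) - 1|} := by
    intro n
    apply measure_mono
    intro ω hω
    by_contra hc
    simp only [Set.mem_setOf_eq, not_le] at hc
    exact absurd hω (by simp only [Set.mem_setOf_eq, not_le]; exact key n ω hc)
  exact tendsto_of_tendsto_of_tendsto_of_le_of_le tendsto_const_nhds (hconv ε hε)
    (fun n => zero_le) hle
end

section
/- (Lower bound on the logistic log-likelihood, Equation (6) of the paper.) Let n, p ∈ ℕ, let X ∈ ℝ^{n×p}, y ∈ {0,1}^n, β ∈ ℝ^p, let S be a configuration of {0,...,p−1}, and let η ∈ ℝ^n with η_i ≠ 0 for all i. Set M_i(S, β) = Σ_{j∈S} x_{ij} β_j. Then Σ_{i=1}^n [ y_i M_i(S,β) − log(1 + exp(M_i(S,β))) ] ≥ Σ_{i=1}^n [ log( exp(η_i)/(1 + exp(η_i)) ) − η_i/2 + (y_i − 1/2) M_i(S,β) − ( tanh(η_i/2)/(4η_i) ) · ( M_i(S,β)² − η_i² ) ]. -/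
open Finset

private lemma hasDerivAt_tanh (x : ℝ) :
    HasDerivAt Real.tanh (1 / Real.cosh x ^ 2) x := by
  have h : HasDerivAt (fun t => Real.sinh t / Real.cosh t)
      ((Real.cosh x * Real.cosh x - Real.sinh x * Real.sinh x) / Real.cosh x ^ 2) x :=
    (Real.hasDerivAt_sinh x).div (Real.hasDerivAt_cosh x) (ne_of_gt (Real.cosh_pos x))
  have : (Real.cosh x * Real.cosh x - Real.sinh x * Real.sinh x) = 1 := by
    have := Real.cosh_sq x
    nlinarith
  rw [this] at h
  exact h.congr_of_eventuallyEq (Filter.Eventually.of_forall fun t => (Real.tanh_eq_sinh_div_cosh t))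

private lemma self_le_sinh_mul_cosh {x : ℝ} (hx : 0 ≤ x) :
    x ≤ Real.sinh x * Real.cosh x := by
  rcases eq_or_lt_of_le hx with h | h
  · simp [← h]
  · have h2 : 2 * x < Real.sinh (2 * x) := Real.self_lt_sinh_iff.2 (by linarith)
    rw [Real.sinh_two_mul] at h2
    linarith

/-- Key monotonicity: for `0 < s ≤ t`, `s * tanh t ≤ t * tanh s`. -/
private lemma tanh_div_antitone {s t : ℝ} (hs : 0 < s) (hst : s ≤ t) :
    s * Real.tanh t ≤ t * Real.tanh s := by
  set ψ : ℝ → ℝ := fun u => u * Real.tanh s - s * Real.tanh u with hψ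
  have hd : ∀ u : ℝ, HasDerivAt ψ (Real.tanh s - s * (1 / Real.cosh u ^ 2)) u := by
    intro u
    exact ((hasDerivAt_id u).mul_const (Real.tanh s)).sub
      ((hasDerivAt_tanh u).const_mul s) |>.congr_deriv (by ring)
  have hmono : MonotoneOn ψ (Set.Ici s) := by
    apply monotoneOn_of_deriv_nonneg (convex_Ici s)
      (fun u _ => ((hd u).continuousAt).continuousWithinAt)
      (fun u _ => ((hd u).differentiableAt).differentiableWithinAt)
    intro u hu
    rw [interior_Ici] at hu
    rw [(hd u).deriv]
    have hcu : Real.cosh s ≤ Real.cosh u := by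
      rw [Real.cosh_le_cosh, abs_of_pos hs, abs_of_pos (hs.trans hu)]
      exact hu.le
    have hcs : 0 < Real.cosh s := Real.cosh_pos s
    have h1 : s / Real.cosh u ^ 2 ≤ s / Real.cosh s ^ 2 := by
      apply div_le_div_of_nonneg_left hs.le (by positivity)
      nlinarith
    have h2 : s / Real.cosh s ^ 2 ≤ Real.tanh s := by
      rw [Real.tanh_eq_sinh_div_cosh, div_le_div_iff₀ (by positivity) hcs]
      nlinarith [self_le_sinh_mul_cosh hs.le]
    have : s * (1 / Real.cosh u ^ 2) = s / Real.cosh u ^ 2 := by ring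
    rw [this]
    linarith
  have := hmono (Set.self_mem_Ici) (Set.mem_Ici.2 hst) hst
  simp only [hψ] at this
  have hts : s * Real.tanh s - s * Real.tanh s = 0 := by ring
  nlinarith [this]

/-- `H x = (tanh b / b) * x^2 / 2 - log (cosh x)` is minimized at `x = b` (for `b > 0`, `x ≥ 0`). -/
private lemma H_min {b : ℝ} (hb : 0 < b) {a : ℝ} (ha : 0 ≤ a) :
    Real.tanh b / b * b ^ 2 / 2 - Real.log (Real.cosh b)
      ≤ Real.tanh b / b * a ^ 2 / 2 - Real.log (Real.cosh a) := by
  set k : ℝ := Real.tanh b / b with hk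
  set H : ℝ → ℝ := fun x => k * x ^ 2 / 2 - Real.log (Real.cosh x) with hH
  have hd : ∀ u : ℝ, HasDerivAt H (k * u - Real.tanh u) u := by
    intro u
    have h1 : HasDerivAt (fun x : ℝ => k * x ^ 2 / 2) (k * u) u := by
      have := ((hasDerivAt_pow 2 u).const_mul k).div_const 2
      exact this.congr_deriv (by norm_num; ring)
    have h2 : HasDerivAt (fun x => Real.log (Real.cosh x)) (Real.tanh u) u := by
      have := (Real.hasDerivAt_cosh u).log (ne_of_gt (Real.cosh_pos u))
      rw [← Real.tanh_eq_sinh_div_cosh] at this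
      exact this
    exact h1.sub h2
  rcases le_total a b with hab | hab
  · -- H is antitone on [0, b]
    have hanti : AntitoneOn H (Set.Icc 0 b) := by
      apply antitoneOn_of_deriv_nonpos (convex_Icc 0 b)
        (fun u _ => ((hd u).continuousAt).continuousWithinAt)
        (fun u hu => ((hd u).differentiableAt).differentiableWithinAt)
      intro u hu
      rw [interior_Icc] at hu
      rw [(hd u).deriv]
      have hu0 : 0 < u := hu.1
      have := tanh_div_antitone hu0 hu.2.le
      rw [hk]
      rw [div_mul_eq_mul_div, sub_nonpos, div_le_iff₀ hb]
      nlinarith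
    exact hanti (Set.mem_Icc.2 ⟨ha, hab⟩) (Set.mem_Icc.2 ⟨hb.le, le_refl b⟩) hab
  · -- H is monotone on [b, ∞)
    have hmono : MonotoneOn H (Set.Ici b) := by
      apply monotoneOn_of_deriv_nonneg (convex_Ici b)
        (fun u _ => ((hd u).continuousAt).continuousWithinAt)
        (fun u _ => ((hd u).differentiableAt).differentiableWithinAt)
      intro u hu
      rw [interior_Ici] at hu
      rw [(hd u).deriv]
      have := tanh_div_antitone hb hu.le
      rw [hk, sub_nonneg, div_mul_eq_mul_div, le_div_iff₀ hb]
      nlinarith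
    exact hmono (Set.self_mem_Ici) (Set.mem_Ici.2 hab) hab

/-- The tangent-type bound for `log cosh` as a function of the square, all real args. -/
private lemma logcosh_bound {a b : ℝ} (hb : b ≠ 0) :
    Real.log (Real.cosh a) - Real.log (Real.cosh b)
      ≤ Real.tanh b / (2 * b) * (a ^ 2 - b ^ 2) := by
  have hb' : 0 < |b| := abs_pos.2 hb
  have ha' : 0 ≤ |a| := abs_nonneg a
  have key := H_min hb' ha'
  have e1 : Real.cosh |a| = Real.cosh a := by
    rcases abs_choice a with h | h <;> rw [h] <;> simp [Real.cosh_neg]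
  have e2 : Real.cosh |b| = Real.cosh b := by
    rcases abs_choice b with h | h <;> rw [h] <;> simp [Real.cosh_neg]
  have e3 : Real.tanh |b| / |b| = Real.tanh b / b := by
    rcases abs_choice b with h | h <;> rw [h]
    rw [Real.tanh_neg]; rw [neg_div_neg_eq]
  have e4 : |a| ^ 2 = a ^ 2 := sq_abs a
  have e5 : |b| ^ 2 = b ^ 2 := sq_abs b
  rw [e1, e2, e3, e4, e5] at key
  have hbb : (b:ℝ) ≠ 0 := hb
  have : Real.tanh b / (2 * b) * (a ^ 2 - b ^ 2)
      = Real.tanh b / b * a ^ 2 / 2 - Real.tanh b / b * b ^ 2 / 2 := by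
    field_simp
  rw [this]
  linarith

private lemma log_one_add_exp (x : ℝ) :
    Real.log (1 + Real.exp x) = x / 2 + Real.log 2 + Real.log (Real.cosh (x / 2)) := by
  have h : 1 + Real.exp x = Real.exp (x / 2) * (2 * Real.cosh (x / 2)) := by
    have e1 : Real.exp (x / 2) * Real.exp (x / 2) = Real.exp x := by
      rw [← Real.exp_add]; ring_nf
    have e2 : Real.exp (x / 2) * Real.exp (-(x / 2)) = 1 := by
      rw [← Real.exp_add]; simp
    rw [Real.cosh_eq]
    nlinarith [e1, e2]
  rw [h, Real.log_mul (Real.exp_ne_zero _) (by positivity), Real.log_exp,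
    Real.log_mul two_ne_zero (ne_of_gt (Real.cosh_pos _))]
  ring

theorem stmt_10 (n p : ℕ) (X : Fin n → Fin p → ℝ) (y : Fin n → ℝ)
    (hy : ∀ i, y i = 0 ∨ y i = 1) (β : Fin p → ℝ) (S : Finset (Fin p))
    (η : Fin n → ℝ) (hη : ∀ i, η i ≠ 0)
    (M : Fin n → ℝ) (hM : ∀ i, M i = ∑ j ∈ S, X i j * β j) :
    ∑ i : Fin n, (y i * M i - Real.log (1 + Real.exp (M i)))
      ≥ ∑ i : Fin n,
          (Real.log (Real.exp (η i) / (1 + Real.exp (η i))) - η i / 2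
            + (y i - 1 / 2) * M i
            - (Real.tanh (η i / 2) / (4 * η i)) * ((M i) ^ 2 - (η i) ^ 2)) := by
  apply Finset.sum_le_sum
  intro i _
  set m := M i
  set e := η i
  have he : e ≠ 0 := hη i
  have he2 : e / 2 ≠ 0 := by simpa using he
  have key := logcosh_bound (a := m / 2) (b := e / 2) he2
  have hrw : Real.tanh (e / 2) / (2 * (e / 2)) * ((m / 2) ^ 2 - (e / 2) ^ 2)
      = Real.tanh (e / 2) / (4 * e) * (m ^ 2 - e ^ 2) := by
    rw [show 2 * (e / 2) = e from by ring,
      show (m / 2) ^ 2 - (e / 2) ^ 2 = (m ^ 2 - e ^ 2) / 4 from by ring,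
      div_mul_div_comm, div_mul_eq_mul_div]
    ring
  rw [hrw] at key
  have h1 := log_one_add_exp m
  have h2 := log_one_add_exp e
  have h3 : Real.log (Real.exp e / (1 + Real.exp e)) = e - Real.log (1 + Real.exp e) := by
    rw [Real.log_div (Real.exp_ne_zero _) (by positivity), Real.log_exp]
  rw [h3, h1, h2]
  linarith
end
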